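/- Let G be a connected graph containing a vertex i which is incident with at least 3 nontrivial bridges of G (i.e., bn(i) ≥ 3). Then the square G² is not hamiltonian. -/

import Mathlib

open SimpleGraph Function

variable {V : Type*}

/-- The square of a graph `G`: two distinct vertices are adjacent iff their distance
in `G` is at most 2, i.e. they are adjacent in `G` or have a common neighbor. -/
def GraphSquare (G : SimpleGraph V) : SimpleGraph V where
  Adj u v := u ≠ v ∧ (G.Adj u v ∨ ∃ w, G.Adj u w ∧ G.Adj w v)
  symm := ⟨by
    rintro u v ⟨hne, h | ⟨w, h1, h2⟩⟩
    · exact ⟨hne.symm, Or.inl h.symm⟩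
    · exact ⟨hne.symm, Or.inr ⟨w, h2.symm, h1.symm⟩⟩⟩
  loopless := ⟨fun v h => h.1 rfl⟩

/-- A leaf of `G` is a vertex with exactly one neighbor. -/
def IsLeafVertex (G : SimpleGraph V) (v : V) : Prop := ∃! w, G.Adj v w

/-- A nontrivial bridge of `G` is a bridge neither of whose endpoints is a leaf. -/
def IsNontrivialBridge (G : SimpleGraph V) (x y : V) : Prop :=
  G.IsBridge s(x, y) ∧ ¬ IsLeafVertex G x ∧ ¬ IsLeafVertex G y

/-- `bn G i` is the number of nontrivial bridges of `G` incident with `i`. -/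
noncomputable def bn (G : SimpleGraph V) (i : V) : ℕ :=
  {v : V | IsNontrivialBridge G i v}.ncard

/-- A cutvertex of a connected graph is a vertex whose removal disconnects the graph. -/
def IsCutVertex (G : SimpleGraph V) (v : V) : Prop :=
  G.Connected ∧ ({u : V | u ≠ v}).Nonempty ∧ ¬ (G.induce {u : V | u ≠ v}).Connected

/-- A block of `G`: a maximal set of vertices inducing a connected subgraph
without a cutvertex of its own. -/
def IsBlock (G : SimpleGraph V) (B : Set V) : Prop :=
  (G.induce B).Connected ∧ (∀ v, ¬ IsCutVertex (G.induce B) v) ∧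
    ∀ C : Set V, B ⊆ C → (G.induce C).Connected →
      (∀ v, ¬ IsCutVertex (G.induce C) v) → C = B

/-- A 2-block of `G`: a block with more than two vertices. -/
def Is2Block (G : SimpleGraph V) (B : Set V) : Prop :=
  IsBlock G B ∧ 2 < B.ncard

/-- The number `k_i` of 2-blocks of `G` containing `i`. -/
noncomputable def numTwoBlocksAt (G : SimpleGraph V) (i : V) : ℕ :=
  {B : Set V | Is2Block G B ∧ i ∈ B}.ncard

/-- The set of cutvertices of `G`. -/
def cutvertexSet (G : SimpleGraph V) : Set V := {v | IsCutVertex G v}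

/-- The block-cutvertex graph of `G`: the bipartite graph on the blocks and the
cutvertices of `G`, a block being adjacent to a cutvertex exactly when the
cutvertex belongs to the block. -/
def bcGraph (G : SimpleGraph V) :
    SimpleGraph ({B : Set V // IsBlock G B} ⊕ {v : V // IsCutVertex G v}) where
  Adj a b := ∃ B v, v.1 ∈ B.1 ∧
      ((a = Sum.inl B ∧ b = Sum.inr v) ∨ (a = Sum.inr v ∧ b = Sum.inl B))
  symm := ⟨by
    rintro a b ⟨B, v, hv, (⟨rfl, rfl⟩ | ⟨rfl, rfl⟩)⟩
    · exact ⟨B, v, hv, Or.inr ⟨rfl, rfl⟩⟩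
    · exact ⟨B, v, hv, Or.inl ⟨rfl, rfl⟩⟩⟩
  loopless := ⟨by
    rintro a ⟨B, v, hv, (⟨rfl, h⟩ | ⟨rfl, h⟩)⟩ <;> simp at h⟩

/-- A graph is hamiltonian if it contains a hamiltonian cycle. -/
def HasHamiltonianCycle (H : SimpleGraph V) : Prop :=
  letI : DecidableEq V := Classical.decEq V
  ∃ (a : V) (c : H.Walk a a), c.IsHamiltonianCycle

/-- There is a hamiltonian path from `x` to `y` in `H`. -/
def HasHamiltonianPath (H : SimpleGraph V) (x y : V) : Prop :=
  letI : DecidableEq V := Classical.decEq V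
  ∃ p : H.Walk x y, p.IsHamiltonian

/-- A graph is hamiltonian connected if any two distinct vertices are joined by a
hamiltonian path. -/
def HamiltonianConnected (H : SimpleGraph V) : Prop :=
  ∀ u v : V, u ≠ v → HasHamiltonianPath H u v

/-- A 2-connected graph (equivalently, a "2-block" regarded as a graph on its own):
a connected graph on at least three vertices without a cutvertex. -/
def IsTwoConnectedGraph [Fintype V] (G : SimpleGraph V) : Prop :=
  3 ≤ Fintype.card V ∧ G.Connected ∧ ∀ v, ¬ IsCutVertex G v

/-- A graph `H` on `n` vertices is panconnected if for every pair of distinct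
vertices `u`, `v` and every `l` with `dist u v ≤ l ≤ n - 1` there is a `u`-`v`
path of length exactly `l`. -/
def Panconnected [Fintype V] (H : SimpleGraph V) : Prop :=
  ∀ u v : V, u ≠ v → ∀ l : ℕ, H.dist u v ≤ l → l ≤ Fintype.card V - 1 →
    ∃ p : H.Walk u v, p.IsPath ∧ p.length = l

/-- A graph `H` on `n` vertices is vertex-pancyclic if every vertex lies on a cycle
of length `l` for every `3 ≤ l ≤ n`. -/
def VertexPancyclic [Fintype V] (H : SimpleGraph V) : Prop :=
  ∀ v : V, ∀ l : ℕ, 3 ≤ l → l ≤ Fintype.card V →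
    ∃ c : H.Walk v v, c.IsCycle ∧ c.length = l

/-- A caterpillar: a tree in which every vertex is within distance 1 of a spine path. -/
def IsCaterpillar (T : SimpleGraph V) : Prop :=
  T.IsTree ∧ ∃ (u v : V) (P : T.Walk u v), P.IsPath ∧
    ∀ w : V, w ∈ P.support ∨ ∃ z ∈ P.support, T.Adj w z

/-- An innerblock of `G`: a block which is not an endblock, i.e. a block containing
at least two cutvertices of `G`. -/
def IsInnerBlock (G : SimpleGraph V) (B : Set V) : Prop :=
  IsBlock G B ∧ 2 ≤ {i : V | IsCutVertex G i ∧ i ∈ B}.ncard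

/-- A block-chain: a connected graph whose block-cutvertex graph is a path. -/
def IsBlockChain (G : SimpleGraph V) : Prop :=
  G.Connected ∧ ∃ n : ℕ, Nonempty (bcGraph G ≃g pathGraph n)


lemma aux_support_eq {G : SimpleGraph V} {u v : V} (p : G.Walk u v) :
    p.support = (List.range (p.length + 1)).map p.getVert := by
  induction p with
  | nil => simp [List.range_succ]
  | cons h q ih =>
    rw [Walk.support_cons, ih]
    conv_rhs => rw [Walk.length_cons, List.range_succ_eq_map]
    simp [List.map_map, Function.comp_def, Walk.getVert_cons_succ]

lemma aux_edges_eq {G : SimpleGraph V} {u v : V} (p : G.Walk u v) :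
    p.edges = (List.range p.length).map (fun t => s(p.getVert t, p.getVert (t + 1))) := by
  induction p with
  | nil => simp
  | cons h q ih =>
    rw [Walk.edges_cons, ih]
    conv_rhs => rw [Walk.length_cons, List.range_succ_eq_map]
    simp [List.map_map, Function.comp_def, Walk.getVert_cons_succ]

lemma aux_edge_mem {G : SimpleGraph V} {u v : V} (p : G.Walk u v) {t : ℕ} (ht : t < p.length) :
    s(p.getVert t, p.getVert (t + 1)) ∈ p.edges := by
  rw [aux_edges_eq]
  exact List.mem_map.mpr ⟨t, List.mem_range.mpr ht, rfl⟩

lemma aux_getVert_injOn {G : SimpleGraph V} {i : V} {c : G.Walk i i}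
    (hc : c.support.tail.Nodup) :
    ∀ s t, 1 ≤ s → s ≤ c.length → 1 ≤ t → t ≤ c.length →
      c.getVert s = c.getVert t → s = t := by
  intro s t hs1 hs2 ht1 ht2 heq
  have h1 : c.support.tail = (List.range c.length).map (fun t => c.getVert (t + 1)) := by
    rw [aux_support_eq, List.range_succ_eq_map]
    simp [List.map_map, Function.comp_def]
  rw [h1] at hc
  have heq' : c.getVert (s - 1 + 1) = c.getVert (t - 1 + 1) := by
    rw [Nat.sub_add_cancel hs1, Nat.sub_add_cancel ht1]; exact heq
  have h2 : s - 1 = t - 1 :=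
    List.inj_on_of_nodup_map hc (List.mem_range.mpr (by omega))
      (List.mem_range.mpr (by omega)) heq'
  omega

lemma aux_path_first_edge {G : SimpleGraph V} {i x v : V} (p : G.Walk i x) (hp : p.IsPath)
    (h : s(i, v) ∈ p.edges) : p.getVert 1 = v := by
  cases p with
  | nil => simp at h
  | @cons _ b _ hadj q =>
    rw [Walk.edges_cons] at h
    rcases List.mem_cons.mp h with h | h
    · rw [Sym2.eq_iff] at h
      rcases h with ⟨-, hb⟩ | ⟨hiv, hbi⟩
      · simp [Walk.getVert_cons_succ, ← hb]
      · exact absurd hiv hadj.ne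
    · exact absurd (q.fst_mem_support_of_mem_edges h) ((Walk.cons_isPath_iff hadj q).mp hp).2

/-- If a connected graph `G` has a vertex incident with at least three nontrivial bridges,
then `G²` is not hamiltonian. -/
theorem square_not_hamiltonian_of_three_nontrivial_bridges [Fintype V]
    (G : SimpleGraph V) (hG : G.Connected) (i : V) (h : 3 ≤ bn G i) :
    ¬ HasHamiltonianCycle (GraphSquare G) := by
  classical
  rintro ⟨a, c0, hc0⟩
  -- Extract three distinct nontrivial bridges at `i`.
  obtain ⟨v1, v2, v3, hv1, hv2, hv3, h12, h13, h23⟩ :=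
    (Set.two_lt_ncard_iff (Set.toFinite _)).mp (by exact_mod_cast h)
  -- The component of `v` after deleting the bridge `s(i, v)`.
  set C : V → Set V := fun v => {x | ¬ (G \ fromEdgeSet {s(i, v)}).Reachable i x} with hC
  have hiC : ∀ v, i ∉ C v := fun v hv => hv (Reachable.refl i)
  have hbr : ∀ v, IsNontrivialBridge G i v →
      G.Adj i v ∧ v ∈ C v := by
    intro v hv
    obtain ⟨hadj, hreach⟩ := And.intro (hv.1.reachable_iff_adj.mp (hG.preconnected i v)) hv.1
    exact ⟨hadj, hreach⟩
  -- Crossing a component boundary with a `G`-edge forces the edge to be the bridge.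
  have cross1 : ∀ v, IsNontrivialBridge G i v → ∀ x y, G.Adj x y → x ∈ C v → y ∉ C v →
      x = v ∧ y = i := by
    intro v hv x y hxy hx hy
    by_cases he : s(x, y) = s(i, v)
    · rw [Sym2.eq_iff] at he
      rcases he with ⟨hxi, -⟩ | ⟨hxv, hyi⟩
      · exact absurd (hxi ▸ hx) (hiC v)
      · exact ⟨hxv, hyi⟩
    · exfalso
      apply hx
      refine (not_not.mp hy).trans (Adj.reachable ?_)
      refine ⟨hxy.symm, ?_⟩
      intro hcon
      rw [fromEdgeSet_adj] at hcon
      exact he (by rw [Sym2.eq_swap]; exact Set.mem_singleton_iff.mp hcon.1)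
  -- Crossing with an edge of the square forces an endpoint to be `v` or `i`.
  have cross2 : ∀ v, IsNontrivialBridge G i v → ∀ x y, (GraphSquare G).Adj x y →
      x ∈ C v → y ∉ C v → x = v ∨ y = i := by
    intro v hv x y hadj hx hy
    obtain ⟨-, hxy | ⟨w, hw1, hw2⟩⟩ : x ≠ y ∧ (G.Adj x y ∨ ∃ w, G.Adj x w ∧ G.Adj w y) := hadj
    · exact Or.inl (cross1 v hv x y hxy hx hy).1
    · by_cases hw : w ∈ C v
      · exact Or.inr (cross1 v hv w y hw2 hw hy).2
      · exact Or.inl (cross1 v hv x w hw1 hx hw).1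
  -- Each bridge end `v` has a neighbor `w ≠ i` lying in its component.
  have hnb : ∀ v, IsNontrivialBridge G i v → ∃ w, G.Adj v w ∧ w ≠ i ∧ w ∈ C v := by
    intro v hv
    obtain ⟨hadj, hvC⟩ := hbr v hv
    have hex : ∃ w, G.Adj v w ∧ w ≠ i := by
      by_contra hcon
      push_neg at hcon
      exact hv.2.2 ⟨i, hadj.symm, hcon⟩
    obtain ⟨w, hvw, hwi⟩ := hex
    refine ⟨w, hvw, hwi, fun hre => hvC ?_⟩
    refine hre.trans (Adj.reachable ?_)
    refine ⟨hvw.symm, ?_⟩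
    intro hcon
    rw [fromEdgeSet_adj] at hcon
    have := Set.mem_singleton_iff.mp hcon.1
    rw [Sym2.eq_iff] at this
    rcases this with ⟨hwi', -⟩ | ⟨-, hvi⟩
    · exact hwi hwi'
    · exact hadj.ne' hvi
  -- The components of distinct bridges are disjoint.
  have disj : ∀ v v', IsNontrivialBridge G i v → IsNontrivialBridge G i v' → v ≠ v' →
      ∀ x, x ∈ C v → x ∈ C v' → False := by
    intro v v' hv hv' hne x hx hx'
    obtain ⟨q⟩ := hG.preconnected i x
    set p := q.bypass with hpdef
    have hp : p.IsPath := q.bypass_isPath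
    have hfirst : ∀ u, IsNontrivialBridge G i u → x ∈ C u → p.getVert 1 = u := by
      intro u hu hxu
      have hmem : s(i, u) ∈ p.edges := by
        by_contra hmem
        exact hxu ⟨p.toDeleteEdges {s(i, u)}
          (fun e he => by simp only [Set.mem_singleton_iff]; rintro rfl; exact hmem he)⟩
      exact aux_path_first_edge p hp hmem
    exact hne ((hfirst v hv hx).symm.trans (hfirst v' hv' hx'))
  -- Rotate the hamiltonian cycle to start at `i`.
  have hi : i ∈ c0.support := hc0.mem_support i
  set c : (GraphSquare G).Walk i i := c0.rotate i hi with hcdef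
  have hcyc : c.IsCycle := hc0.isCycle.rotate hi
  have hmem : ∀ w : V, w ∈ c.support := by
    intro w
    have h1 : w ∈ c0.support.tail := by
      have hcount := (Walk.isHamiltonianCycle_iff_isCycle_and_support_count_tail_eq_one.mp hc0).2 w
      have : 0 < c0.support.tail.count w := by omega
      exact List.count_pos_iff.mp this
    have h2 : w ∈ (c0.rotate i hi).support.tail :=
      ((Walk.support_rotate c0 i hi).perm.mem_iff).mpr h1
    rw [hcdef]
    exact List.mem_of_mem_tail h2
  set n := c.length with hn
  have hn3 : 3 ≤ n := hcyc.three_le_length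
  have hx0 : c.getVert 0 = i := c.getVert_zero
  have hxn : c.getVert n = i := c.getVert_length
  have hinj := aux_getVert_injOn hcyc.support_nodup
  -- For each bridge, the cycle contains an edge from `i` into the component.
  have key : ∀ v, IsNontrivialBridge G i v → ∃ z, z ∈ C v ∧ s(i, z) ∈ c.edges := by
    intro v hv
    by_contra hno
    push_neg at hno
    obtain ⟨w, hvw, hwi, hwC⟩ := hnb v hv
    obtain ⟨s, hsw, hsn⟩ := Walk.mem_support_iff_exists_getVert.mp (hmem w)
    have hs1 : 1 ≤ s := by
      rcases Nat.eq_zero_or_pos s with rfl | h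
      · exact absurd (hx0.symm.trans hsw) (Ne.symm hwi)
      · exact h
    -- first entry into the component
    have hex1 : ∃ t, c.getVert t ∈ C v := ⟨s, hsw ▸ hwC⟩
    set t := Nat.find hex1 with htdef
    have htC : c.getVert t ∈ C v := Nat.find_spec hex1
    have hts : t ≤ s := Nat.find_le (hsw ▸ hwC)
    have ht1 : 1 ≤ t := by
      rcases Nat.eq_zero_or_pos t with ht0 | h
      · exact absurd (hx0 ▸ (ht0 ▸ htC)) (hiC v)
      · exact h
    have htpre : c.getVert (t - 1) ∉ C v := Nat.find_min hex1 (by omega)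
    have hadj1 : (GraphSquare G).Adj (c.getVert (t - 1)) (c.getVert t) := by
      have := c.adj_getVert_succ (i := t - 1) (by omega)
      rwa [Nat.sub_add_cancel ht1] at this
    have htv : c.getVert t = v := by
      rcases cross2 v hv _ _ hadj1.symm htC htpre with h' | h'
      · exact h'
      · exfalso
        have hedge : s(c.getVert (t - 1), c.getVert t) ∈ c.edges := by
          have := aux_edge_mem c (t := t - 1) (by omega)
          rwa [Nat.sub_add_cancel ht1] at this
        rw [h'] at hedge
        exact hno _ htC hedge
    -- last exit from the component
    have hex2 : ∃ d, c.getVert (s + d) ∉ C v := ⟨n - s, by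
      rw [show s + (n - s) = n by omega, hxn]; exact hiC v⟩
    set d := Nat.find hex2 with hddef
    have hdC : c.getVert (s + d) ∉ C v := Nat.find_spec hex2
    have hdn : d ≤ n - s := Nat.find_le (by
      rw [show s + (n - s) = n by omega, hxn]; exact hiC v)
    have hd1 : 1 ≤ d := by
      rcases Nat.eq_zero_or_pos d with hd0 | h
      · rw [hd0, Nat.add_zero] at hdC; exact absurd (hsw ▸ hwC) hdC
      · exact h
    have hdpre : c.getVert (s + d - 1) ∈ C v := by
      have := Nat.find_min hex2 (m := d - 1) (by omega)
      rw [not_not] at this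
      rwa [show s + (d - 1) = s + d - 1 by omega] at this
    have hadj2 : (GraphSquare G).Adj (c.getVert (s + d - 1)) (c.getVert (s + d)) := by
      have := c.adj_getVert_succ (i := s + d - 1) (by omega)
      rwa [show s + d - 1 + 1 = s + d by omega] at this
    have hdv : c.getVert (s + d - 1) = v := by
      rcases cross2 v hv _ _ hadj2 hdpre hdC with h' | h'
      · exact h'
      · exfalso
        have hedge : s(c.getVert (s + d - 1), c.getVert (s + d)) ∈ c.edges := by
          have := aux_edge_mem c (t := s + d - 1) (by omega)
          rwa [show s + d - 1 + 1 = s + d by omega] at this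
        rw [h', Sym2.eq_swap] at hedge
        exact hno _ hdpre hedge
    -- `v` occurs at two distinct interior positions: contradiction
    have heq : t = s + d - 1 := hinj t (s + d - 1) ht1 (by omega) (by omega) (by omega)
      (by rw [htv, hdv])
    have hsv : c.getVert s = v := by
      have : t = s := by omega
      rw [← this, htv]
    exact hvw.ne' (hsw ▸ hsv ▸ rfl : w = v)
  -- Edges of the cycle at `i` have their other end at position `1` or `n - 1`.
  have edgeAt : ∀ z, s(i, z) ∈ c.edges → z = c.getVert 1 ∨ z = c.getVert (n - 1) := by
    intro z hz
    rw [aux_edges_eq] at hz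
    obtain ⟨t, htr, hte⟩ := List.mem_map.mp hz
    rw [List.mem_range] at htr
    rw [Sym2.eq_iff] at hte
    rcases hte with ⟨hti, htz⟩ | ⟨htz, hti⟩
    · rcases Nat.eq_zero_or_pos t with rfl | h
      · exact Or.inl htz.symm
      · exfalso
        have : t = n := hinj t n h (by omega) (by omega) (le_refl n) (by rw [hti, hxn])
        omega
    · have : t + 1 = n := hinj (t + 1) n (by omega) (by omega) (by omega) (le_refl n)
        (by rw [hti, hxn])
      refine Or.inr ?_
      rw [← htz]
      congr 1
      omega
  obtain ⟨z1, hz1C, hz1e⟩ := key v1 hv1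
  obtain ⟨z2, hz2C, hz2e⟩ := key v2 hv2
  obtain ⟨z3, hz3C, hz3e⟩ := key v3 hv3
  have hne12 : z1 ≠ z2 := fun he => disj v1 v2 hv1 hv2 h12 z1 hz1C (he ▸ hz2C)
  have hne13 : z1 ≠ z3 := fun he => disj v1 v3 hv1 hv3 h13 z1 hz1C (he ▸ hz3C)
  have hne23 : z2 ≠ z3 := fun he => disj v2 v3 hv2 hv3 h23 z2 hz2C (he ▸ hz3C)
  rcases edgeAt z1 hz1e with h1 | h1 <;> rcases edgeAt z2 hz2e with h2 | h2 <;>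
    rcases edgeAt z3 hz3e with h3 | h3 <;>
    first
      | exact hne12 (h1.trans h2.symm)
      | exact hne13 (h1.trans h3.symm)
      | exact hne23 (h2.trans h3.symm)
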